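/- Let R be a commutative ring, ι a finite index type, and (M k) a family of R-modules indexed by k : ι. Let f, g : (k : ι) → (M k →ₗ[R] M k) and fix i₀ : ι. Suppose (f k) ∘ (g k) = (g k) ∘ (f k) for every k ≠ i₀, while (f i₀) ∘ (g i₀) = −((g i₀) ∘ (f i₀)). Then the induced endomorphisms F = PiTensorProduct.map f and G = PiTensorProduct.map g of ⨂[R] k, M k anticommute: F ∘ G = −(G ∘ F). -/
import Mathlib

open scoped TensorProduct

/-- if two families of local operators commute sitewise except at one site `i₀`,
where they anticommute, then the induced endomorphisms of the tensor product anticommute. -/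
theorem piTensor_maps_anticommute {R : Type*} [CommRing R] {ι : Type*} [Fintype ι]
    (M : ι → Type*) [∀ k, AddCommGroup (M k)] [∀ k, Module R (M k)]
    (f g : (k : ι) → (M k →ₗ[R] M k)) (i₀ : ι)
    (hcomm : ∀ k, k ≠ i₀ → f k ∘ₗ g k = g k ∘ₗ f k)
    (hanti : f i₀ ∘ₗ g i₀ = -(g i₀ ∘ₗ f i₀)) :
    PiTensorProduct.map f ∘ₗ PiTensorProduct.map g =
      -(PiTensorProduct.map g ∘ₗ PiTensorProduct.map f) := by
  classical
  ext x
  simp only [LinearMap.compMultilinearMap_apply, LinearMap.coe_comp, Function.comp_apply,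
    PiTensorProduct.map_tprod, LinearMap.neg_apply]
  have h1 : (fun k => f k (g k (x k))) =
      Function.update (fun k => g k (f k (x k))) i₀ (-(g i₀ (f i₀ (x i₀)))) := by
    funext k
    by_cases hk : k = i₀
    · subst hk
      simp [Function.update_self]
      have := congrArg (fun φ => φ (x k)) hanti
      simpa using this
    · rw [Function.update_of_ne hk]
      have := congrArg (fun φ => φ (x k)) (hcomm k hk)
      simpa using this
  rw [h1]
  rw [MultilinearMap.map_update_neg]
  congr 1
  congr 1
  funext k
  by_cases hk : k = i₀
  · subst hk; simp
  · rw [Function.update_of_ne hk]
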